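/- arXiv:1810.06780 — 9 statements merged into one kernel-verified Lean document; each statement's English description precedes it below -/
import Mathlib

section
/- Let F be a field in which every quadratic and cubic polynomial has a root. Then every 2-dimensional algebra over F has at least one one-dimensional subalgebra. -/
theorem stmt_6 {F : Type*} [Field F]
    (hroots : ∀ q : Polynomial F, (q.degree = 2 ∨ q.degree = 3) → ∃ x : F, q.IsRoot x)
    (m : (F × F) →ₗ[F] (F × F) →ₗ[F] (F × F)) :
    ∃ w : F × F, w ≠ 0 ∧
      ∀ u v : F × F, u ∈ Submodule.span F {w} → v ∈ Submodule.span F {w} →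
        m u v ∈ Submodule.span F {w} := by
  suffices h : ∃ w : F × F, w ≠ 0 ∧ m w w ∈ Submodule.span F {w} by
    obtain ⟨w, hw, hm⟩ := h
    refine ⟨w, hw, ?_⟩
    intro u v hu hv
    rw [Submodule.mem_span_singleton] at hu hv hm ⊢
    obtain ⟨s, rfl⟩ := hu; obtain ⟨t, rfl⟩ := hv
    obtain ⟨r, hr⟩ := hm
    refine ⟨s * t * r, ?_⟩
    simp only [map_smul, LinearMap.smul_apply, ← hr, smul_smul]
    ring_nf
  set a := m (1, 0) (1, 0) with ha
  set b := m (1, 0) (0, 1) + m (0, 1) (1, 0) with hb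
  set c := m (0, 1) (0, 1) with hc
  by_cases h2 : a.2 = 0
  · refine ⟨(1, 0), by simp, ?_⟩
    rw [Submodule.mem_span_singleton]
    exact ⟨a.1, by rw [← ha]; ext <;> simp [h2]⟩
  · obtain ⟨x, hx⟩ := hroots (Polynomial.C (-a.2) * Polynomial.X ^ 3 +
      Polynomial.C (a.1 - b.2) * Polynomial.X ^ 2 + Polynomial.C (b.1 - c.2) * Polynomial.X +
      Polynomial.C c.1) (Or.inr (Polynomial.degree_cubic (neg_ne_zero.mpr h2)))
    simp only [Polynomial.IsRoot, Polynomial.eval_add, Polynomial.eval_mul, Polynomial.eval_pow,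
      Polynomial.eval_C, Polynomial.eval_X] at hx
    refine ⟨(x, 1), by simp, ?_⟩
    rw [Submodule.mem_span_singleton]
    have hdec : ((x, 1) : F × F) = x • ((1 : F), (0 : F)) + ((0 : F), (1 : F)) := by
      ext <;> simp
    have hM : m (x, 1) (x, 1) = (x * x) • a + x • m (1, 0) (0, 1) + x • m (0, 1) (1, 0) + c := by
      rw [hdec, ha, hc]
      simp only [map_add, map_smul, LinearMap.add_apply, LinearMap.smul_apply, smul_add, smul_smul]
      abel
    refine ⟨(m (x, 1) (x, 1)).2, ?_⟩
    have h1 : (m (x, 1) (x, 1)).1 = x * x * a.1 + x * b.1 + c.1 := by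
      rw [hM, hb]; simp [mul_add]; ring
    have h2' : (m (x, 1) (x, 1)).2 = x * x * a.2 + x * b.2 + c.2 := by
      rw [hM, hb]; simp [mul_add]; ring
    ext
    · simp only [Prod.smul_fst, smul_eq_mul, h1, h2']
      linear_combination -hx
    · simp [h2']
end

section
/- Let F be an infinite field and A a 2-dimensional algebra over F. If A has four distinct one-dimensional subalgebras, then every one-dimensional subspace of A is a subalgebra. -/
lemma aux_mem_span {F : Type*} [Field F] (z v : F × F) (hz : z ≠ 0) :
    v ∈ Submodule.span F {z} ↔ z.1 * v.2 = z.2 * v.1 := by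
  rw [Submodule.mem_span_singleton]
  constructor
  · rintro ⟨k, rfl⟩
    simp only [Prod.smul_fst, Prod.smul_snd, smul_eq_mul]
    ring
  · intro h
    by_cases h1 : z.1 = 0
    · have h2 : z.2 ≠ 0 := by
        intro h2; exact hz (Prod.ext h1 h2)
      have hv1 : v.1 = 0 := by
        rw [h1, zero_mul] at h
        exact (mul_eq_zero.mp h.symm).resolve_left h2
      refine ⟨v.2 / z.2, Prod.ext ?_ ?_⟩
      · simp [h1, hv1]
      · simp only [Prod.smul_snd, smul_eq_mul]; field_simp
    · refine ⟨v.1 / z.1, Prod.ext ?_ ?_⟩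
      · simp only [Prod.smul_fst, smul_eq_mul]; field_simp
      · simp only [Prod.smul_snd, smul_eq_mul]; field_simp
        linear_combination -h

lemma aux_span_eq {F : Type*} [Field F] (z v : F × F) (hz : z ≠ 0) (hv : v ≠ 0)
    (h : z.1 * v.2 = z.2 * v.1) : Submodule.span F {z} = Submodule.span F {v} := by
  apply le_antisymm <;> rw [Submodule.span_le, Set.singleton_subset_iff, SetLike.mem_coe]
  · rw [aux_mem_span v z hv]; linear_combination -h
  · rw [aux_mem_span z v hz]; exact h

lemma aux_expand {F : Type*} [Field F] (m : (F × F) →ₗ[F] (F × F) →ₗ[F] (F × F))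
    (x y : F) :
    m (x, y) (x, y) = (x*x) • m (1,0) (1,0) + (x*y) • (m (1,0) (0,1) + m (0,1) (1,0))
      + (y*y) • m (0,1) (0,1) := by
  have h : (x, y) = x • ((1:F),(0:F)) + y • ((0:F),(1:F)) := by
    simp [Prod.ext_iff]
  rw [h]
  simp only [map_add, map_smul, LinearMap.add_apply, LinearMap.smul_apply, smul_add, smul_smul]
  module

theorem stmt_7 {F : Type*} [Field F] [Infinite F]
    (m : (F × F) →ₗ[F] (F × F) →ₗ[F] (F × F))
    (w : Fin 4 → F × F) (hw : ∀ i, w i ≠ 0)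
    (hdist : ∀ i j, i ≠ j → Submodule.span F {w i} ≠ Submodule.span F {w j})
    (hsub : ∀ i, ∀ u ∈ Submodule.span F {w i}, ∀ v ∈ Submodule.span F {w i},
      m u v ∈ Submodule.span F {w i}) :
    ∀ z : F × F, z ≠ 0 →
      ∀ u ∈ Submodule.span F {z}, ∀ v ∈ Submodule.span F {z},
        m u v ∈ Submodule.span F {z} := by
  classical
  obtain ⟨c3, c2, c1, c0, hD⟩ : ∃ c3 c2 c1 c0 : F, ∀ p : F × F,
      p.1 * (m p p).2 - p.2 * (m p p).1
        = c3 * p.1^3 + c2 * p.1^2 * p.2 + c1 * p.1 * p.2^2 + c0 * p.2^3 := by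
    refine ⟨(m (1,0) (1,0)).2,
      (m (1,0) (0,1) + m (0,1) (1,0)).2 - (m (1,0) (1,0)).1,
      (m (0,1) (0,1)).2 - (m (1,0) (0,1) + m (0,1) (1,0)).1,
      -(m (0,1) (0,1)).1, ?_⟩
    intro p
    have h := aux_expand m p.1 p.2
    rw [Prod.mk.eta] at h
    rw [h]
    simp only [Prod.fst_add, Prod.snd_add, Prod.smul_fst, Prod.smul_snd, smul_eq_mul]
    ring
  have hroot : ∀ i, c3 * (w i).1^3 + c2 * (w i).1^2 * (w i).2
      + c1 * (w i).1 * (w i).2^2 + c0 * (w i).2^3 = 0 := by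
    intro i
    have hmm := hsub i (w i) (Submodule.mem_span_singleton_self _)
      (w i) (Submodule.mem_span_singleton_self _)
    have hrel := (aux_mem_span (w i) _ (hw i)).1 hmm
    rw [← hD (w i)]
    linear_combination hrel
  have hdet : ∀ i j, i ≠ j → (w i).1 * (w j).2 ≠ (w i).2 * (w j).1 := by
    intro i j hij h
    exact hdist i j hij (aux_span_eq _ _ (hw i) (hw j) h)
  -- show all coefficients vanish
  have hzero : c3 = 0 ∧ c2 = 0 ∧ c1 = 0 ∧ c0 = 0 := by
    by_cases hall : ∀ i, (w i).1 ≠ 0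
    · -- four distinct slopes, cubic with 4 roots
      set p : Polynomial F := Polynomial.C c0 * Polynomial.X^3 + Polynomial.C c1 * Polynomial.X^2
        + Polynomial.C c2 * Polynomial.X + Polynomial.C c3 with hp
      set t : Fin 4 → F := fun i => (w i).2 / (w i).1 with ht
      have tinj : Function.Injective t := by
        intro i j hij
        by_contra hne
        apply hdet i j hne
        rw [ht] at hij
        have h1 := hall i
        have h2 := hall j
        field_simp at hij
        linear_combination -hij
      have heval : ∀ i, p.eval (t i) = 0 := by
        intro i
        simp only [hp, ht, Polynomial.eval_add, Polynomial.eval_mul, Polynomial.eval_pow,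
          Polynomial.eval_C, Polynomial.eval_X]
        have hx := hall i
        field_simp
        linear_combination hroot i
      have hdeg : p.natDegree < Fintype.card (Fin 4) := by
        have h3 : p.natDegree ≤ 3 := by rw [hp]; compute_degree
        simpa using lt_of_le_of_lt h3 (by norm_num)
      have hp0 : p = 0 := Polynomial.eq_zero_of_natDegree_lt_card_of_eval_eq_zero p tinj heval hdeg
      refine ⟨?_, ?_, ?_, ?_⟩
      · have := congrArg (fun q => Polynomial.coeff q 0) hp0
        simpa [hp, Polynomial.coeff_X_pow] using this
      · have := congrArg (fun q => Polynomial.coeff q 1) hp0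
        simpa [hp, Polynomial.coeff_X_pow] using this
      · have := congrArg (fun q => Polynomial.coeff q 2) hp0
        simpa [hp, Polynomial.coeff_X_pow] using this
      · have := congrArg (fun q => Polynomial.coeff q 3) hp0
        simpa [hp, Polynomial.coeff_X_pow] using this
    · push_neg at hall
      obtain ⟨i0, hi0⟩ := hall
      have hy0 : (w i0).2 ≠ 0 := by
        intro h2; exact hw i0 (Prod.ext hi0 h2)
      have hc0z : c0 = 0 := by
        have h := hroot i0
        rw [hi0] at h
        have h' : c0 * (w i0).2^3 = 0 := by linear_combination h
        have h3 : (w i0).2^3 ≠ 0 := pow_ne_zero 3 hy0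
        exact (mul_eq_zero.mp h').resolve_right h3
      have hxj : ∀ j, j ≠ i0 → (w j).1 ≠ 0 := by
        intro j hj hxj0
        exact hdet i0 j (Ne.symm hj) (by rw [hi0, hxj0]; ring)
      set q : Polynomial F := Polynomial.C c1 * Polynomial.X^2
        + Polynomial.C c2 * Polynomial.X + Polynomial.C c3 with hq
      set t : {j : Fin 4 // j ≠ i0} → F := fun j => (w j.1).2 / (w j.1).1 with ht
      have tinj : Function.Injective t := by
        intro i j hij
        by_contra hne
        have hne' : (i : Fin 4) ≠ (j : Fin 4) := fun h => hne (Subtype.ext h)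
        apply hdet i j hne'
        rw [ht] at hij
        have h1 := hxj i i.2
        have h2 := hxj j j.2
        field_simp at hij
        linear_combination -hij
      have heval : ∀ j, q.eval (t j) = 0 := by
        intro j
        simp only [hq, ht, Polynomial.eval_add, Polynomial.eval_mul, Polynomial.eval_pow,
          Polynomial.eval_C, Polynomial.eval_X]
        have hx := hxj j j.2
        field_simp
        apply mul_left_cancel₀ hx
        linear_combination (hroot j.1 - ((w j.1).2)^3 * hc0z)
      have hcard : Fintype.card {j : Fin 4 // j ≠ i0} = 3 := by
        simp [Fintype.card_subtype_compl]
      have hdeg : q.natDegree < Fintype.card {j : Fin 4 // j ≠ i0} := by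
        have h2 : q.natDegree ≤ 2 := by rw [hq]; compute_degree
        rw [hcard]; omega
      have hq0 : q = 0 := Polynomial.eq_zero_of_natDegree_lt_card_of_eval_eq_zero q tinj heval hdeg
      refine ⟨?_, ?_, ?_, hc0z⟩
      · have := congrArg (fun r => Polynomial.coeff r 0) hq0
        simpa [hq, Polynomial.coeff_X_pow] using this
      · have := congrArg (fun r => Polynomial.coeff r 1) hq0
        simpa [hq, Polynomial.coeff_X_pow] using this
      · have := congrArg (fun r => Polynomial.coeff r 2) hq0
        simpa [hq, Polynomial.coeff_X_pow] using this
  obtain ⟨h3, h2, h1, h0⟩ := hzero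
  intro z hz u hu v hv
  rw [Submodule.mem_span_singleton] at hu hv
  obtain ⟨k, rfl⟩ := hu
  obtain ⟨l, rfl⟩ := hv
  have hmzz : m z z ∈ Submodule.span F {z} := by
    rw [aux_mem_span z _ hz]
    have hd := hD z
    rw [h3, h2, h1, h0] at hd
    linear_combination hd
  have heq : m (k • z) (l • z) = (k * l) • m z z := by
    simp [map_smul, smul_smul, mul_comm]
  rw [heq]
  exact Submodule.smul_mem _ _ hmzz
end

section
/- Let F be a field with char F ≠ 2,3 containing √3 (e.g., algebraically closed), and let A₁₁ be the 2-dimensional F-algebra with basis e₁,e₂ and multiplication e₁e₁ = e₂, e₁e₂ = e₁, e₂e₁ = e₁, e₂e₂ = −e₂. Then A₁₁ has exactly three one-dimensional subalgebras, namely F·e₂, F·(e₁ − e₂/√3), and F·(e₁ + e₂/√3). -/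
def mulA11 {F : Type*} [Field F] (u v : F × F) : F × F :=
  (u.1 * v.2 + u.2 * v.1, u.1 * v.1 - u.2 * v.2)

lemma mulA11_smul {F : Type*} [Field F] (c d : F) (g : F × F) :
    mulA11 (c • g) (d • g) = (c * d) • mulA11 g g := by
  simp [mulA11, Prod.ext_iff, Prod.smul_def, smul_eq_mul]
  constructor <;> ring

lemma span_eq_span_of_smul {F : Type*} [Field F] (c : F) (hc : c ≠ 0) (g : F × F) :
    Submodule.span F {c • g} = Submodule.span F {g} := by
  apply le_antisymm
  · rw [Submodule.span_le, Set.singleton_subset_iff]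
    exact Submodule.smul_mem _ _ (Submodule.mem_span_singleton_self g)
  · rw [Submodule.span_le, Set.singleton_subset_iff]
    refine (Submodule.mem_span_singleton).mpr ⟨c⁻¹, ?_⟩
    rw [smul_smul, inv_mul_cancel₀ hc, one_smul]

lemma closure_of_span {F : Type*} [Field F] (g : F × F)
    (hg : mulA11 g g ∈ Submodule.span F {g}) :
    ∀ u v : F × F, u ∈ Submodule.span F {g} → v ∈ Submodule.span F {g} →
      mulA11 u v ∈ Submodule.span F {g} := by
  intro u v hu hv
  obtain ⟨c, rfl⟩ := Submodule.mem_span_singleton.mp hu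
  obtain ⟨d, rfl⟩ := Submodule.mem_span_singleton.mp hv
  rw [mulA11_smul]
  exact Submodule.smul_mem _ _ hg

theorem stmt_8 {F : Type*} [Field F] (h2 : ringChar F ≠ 2) (h3 : ringChar F ≠ 3)
    (s : F) (hs : s ^ 2 = 3) :
    ∀ w : F × F, w ≠ 0 →
      ((∀ u v : F × F, u ∈ Submodule.span F {w} → v ∈ Submodule.span F {w} →
          mulA11 u v ∈ Submodule.span F {w}) ↔
        (Submodule.span F {w} = Submodule.span F {(((0 : F), (1 : F)) : F × F)} ∨
         Submodule.span F {w} = Submodule.span F {(((1 : F), -(1 / s)) : F × F)} ∨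
         Submodule.span F {w} = Submodule.span F {(((1 : F), 1 / s) : F × F)})) := by
  have h3F : (3 : F) ≠ 0 := by
    intro h
    have hd : ringChar F ∣ 3 := by
      have := (CharP.cast_eq_zero_iff F (ringChar F) 3).mp (by exact_mod_cast h)
      exact this
    rcases (Nat.prime_three.eq_one_or_self_of_dvd _ hd) with h1 | h1
    · exact CharP.ringChar_ne_one h1
    · exact h3 h1
  have hs0 : s ≠ 0 := by
    intro h; rw [h] at hs; simp at hs; exact h3F hs.symm
  intro w hw
  obtain ⟨a, b⟩ := w
  constructor
  · intro h
    have hm : mulA11 (a, b) (a, b) ∈ Submodule.span F {((a, b) : F × F)} :=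
      h _ _ (Submodule.mem_span_singleton_self _) (Submodule.mem_span_singleton_self _)
    obtain ⟨t, ht⟩ := Submodule.mem_span_singleton.mp hm
    rw [Prod.smul_def, mulA11, Prod.ext_iff] at ht
    simp only [smul_eq_mul] at ht
    obtain ⟨ht1, ht2⟩ := ht
    have key : a * (a ^ 2 - 3 * b ^ 2) = 0 := by
      linear_combination b * ht1 - a * ht2
    rcases mul_eq_zero.mp key with ha | hab
    · -- a = 0, so b ≠ 0
      left
      subst ha
      have hb : b ≠ 0 := by simpa [Prod.ext_iff] using hw
      have : ((0 : F), b) = b • (((0 : F), (1 : F)) : F × F) := by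
        simp [Prod.ext_iff]
      rw [this, span_eq_span_of_smul b hb]
    · -- a² = 3b²
      have hb : b ≠ 0 := by
        intro h0
        subst h0
        have : a = 0 := by
          have : a ^ 2 = 0 := by linear_combination hab
          exact pow_eq_zero_iff (n := 2) (by norm_num) |>.mp this
        exact hw (by simp [Prod.ext_iff, this])
      have hfac : (a - s * b) * (a + s * b) = 0 := by
        linear_combination hab - b ^ 2 * hs
      rcases mul_eq_zero.mp hfac with hc | hc
      · right; right
        have ha : a = s * b := by linear_combination hc
        have : ((a, b) : F × F) = (s * b) • (((1 : F), 1 / s) : F × F) := by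
          simp [Prod.ext_iff, ha]
          field_simp
        rw [this, span_eq_span_of_smul _ (mul_ne_zero hs0 hb)]
      · right; left
        have ha : a = -(s * b) := by linear_combination hc
        have : ((a, b) : F × F) = (-(s * b)) • (((1 : F), -(1 / s)) : F × F) := by
          simp [Prod.ext_iff, ha]
          field_simp
        rw [this, span_eq_span_of_smul _ (neg_ne_zero.mpr (mul_ne_zero hs0 hb))]
  · rintro (h | h | h) <;> rw [h]
    · apply closure_of_span
      refine Submodule.mem_span_singleton.mpr ⟨-1, ?_⟩
      simp [mulA11, Prod.ext_iff]
    · apply closure_of_span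
      refine Submodule.mem_span_singleton.mpr ⟨-(2/s), ?_⟩
      simp [mulA11, Prod.ext_iff, Prod.smul_def, smul_eq_mul]
      constructor <;> field_simp
      all_goals first | ring1 | linear_combination hs | linear_combination -hs
    · apply closure_of_span
      refine Submodule.mem_span_singleton.mpr ⟨2/s, ?_⟩
      simp [mulA11, Prod.ext_iff, Prod.smul_def, smul_eq_mul]
      constructor <;> field_simp
      all_goals first | ring1 | linear_combination hs | linear_combination -hs
end

section
/- Let F be a field with char F ≠ 2,3 containing √3, and let A₁₁ be the algebra with e₁e₁ = e₂, e₁e₂ = e₂e₁ = e₁, e₂e₂ = −e₂. Then the set of idempotents of A₁₁ is exactly {−e₂, (√3/2)e₁ + (1/2)e₂, −(√3/2)e₁ + (1/2)e₂}. -/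
theorem stmt_9 {F : Type*} [Field F] (h2 : ringChar F ≠ 2) (h3 : ringChar F ≠ 3)
    (s : F) (hs : s ^ 2 = 3) :
    {v : F × F | v ≠ 0 ∧ mulA11 v v = v} =
      {((0 : F), (-1 : F)), ((s / 2 : F), (1 / 2 : F)), ((-(s / 2) : F), (1 / 2 : F))} := by
  have two : (2 : F) ≠ 0 := by simpa using (Ring.two_ne_zero h2)
  have three : (3 : F) ≠ 0 := by
    intro h
    have hdvd : ringChar F ∣ 3 := (ringChar.spec F 3).mp (by exact_mod_cast h)
    rcases Nat.prime_three.eq_one_or_self_of_dvd _ hdvd with h1 | h1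
    · have := @CharP.cast_eq_zero F _ 1 (ringChar.eq_iff.mp h1)
      simp at this
    · exact h3 h1
  have hsne : s ≠ 0 := by
    intro h; rw [h] at hs; simp at hs; exact three hs.symm
  ext ⟨a, b⟩
  simp only [Set.mem_setOf_eq, mulA11, Prod.mk.injEq, Set.mem_insert_iff,
    Set.mem_singleton_iff, Prod.ext_iff, ne_eq, Prod.mk_eq_zero]
  constructor
  · rintro ⟨hne, h1, hb⟩
    by_cases ha : a = 0
    · left
      subst ha
      simp at hb hne
      refine ⟨rfl, ?_⟩
      have : b * (b + 1) = 0 := by linear_combination -hb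
      rcases mul_eq_zero.mp this with h | h
      · exact absurd h hne
      · linear_combination h
    · have hb2 : b = 1/2 := by
        have : a * (2 * b - 1) = 0 := by linear_combination h1
        rcases mul_eq_zero.mp this with h | h
        · exact absurd h ha
        · field_simp; linear_combination h
      subst hb2
      field_simp [two] at hb
      have ha2 : (2 * a - s) * (2 * a + s) = 0 := by
        linear_combination hb - hs
      rcases mul_eq_zero.mp ha2 with h | h
      · right; left; exact ⟨by rw [eq_div_iff two]; linear_combination h, rfl⟩
      · right; right
        refine ⟨?_, rfl⟩
        field_simp [two]
        linear_combination h
  · rintro (⟨ha, hb⟩ | ⟨ha, hb⟩ | ⟨ha, hb⟩) <;> subst ha <;> subst hb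
    · refine ⟨by simp, by ring, by ring⟩
    · refine ⟨fun h => ?_, by field_simp [two]; ring, ?_⟩
      · have := h.1; exact hsne (by simpa [two] using this)
      · field_simp [two]; linear_combination hs
    · refine ⟨fun h => ?_, by field_simp [two]; ring, ?_⟩
      · have := h.1; exact hsne (by simpa [two] using this)
      · field_simp [two]; linear_combination hs
end

section
/- Let F be a field with char F ≠ 2,3 and A₁₀ the 2-dimensional algebra with e₁e₁ = 0, e₁e₂ = e₂e₁ = e₁, e₂e₂ = −e₂. Then the only idempotent of A₁₀ is −e₂. -/
/-- Multiplication of `A₁₀`: `e₁e₁ = 0`, `e₁e₂ = e₂e₁ = e₁`, `e₂e₂ = -e₂`. -/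
def mulA10 {F : Type*} [Field F] (u v : F × F) : F × F :=
  (u.1 * v.2 + u.2 * v.1, -(u.2 * v.2))

lemma my_three_ne_zero {F : Type*} [Field F] (h3 : ringChar F ≠ 3) : (3 : F) ≠ 0 := by
  intro h
  have hd : ringChar F ∣ 3 := (ringChar.spec F 3).mp (by exact_mod_cast h)
  exact h3 ((Nat.Prime.eq_one_or_self_of_dvd Nat.prime_three _ hd).resolve_left
    CharP.ringChar_ne_one)

theorem stmt_10 {F : Type*} [Field F] (h2 : ringChar F ≠ 2) (h3 : ringChar F ≠ 3) :
    {v : F × F | v ≠ 0 ∧ mulA10 v v = v} = {((0 : F), (-1 : F))} := by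
  have h3' : (3 : F) ≠ 0 := my_three_ne_zero h3
  ext ⟨a, b⟩
  simp only [Set.mem_setOf_eq, Set.mem_singleton_iff, mulA10, Prod.mk.injEq, Prod.ext_iff]
  constructor
  · rintro ⟨hne, h1, hb⟩
    rcases mul_eq_zero.mp (show b * (b + 1) = 0 by linear_combination -hb) with h | h
    · exfalso
      apply hne
      have ha : a = 0 := by subst h; simpa using h1.symm
      simp [Prod.ext_iff, ha, h]
    · have hb1 : b = -1 := eq_neg_of_add_eq_zero_left h
      refine ⟨?_, hb1⟩
      have h3a : 3 * a = 0 := by subst hb1; linear_combination -h1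
      exact (mul_eq_zero.mp h3a).resolve_left h3'
  · rintro ⟨ha, hb⟩
    subst ha; subst hb
    refine ⟨by simp [Prod.ext_iff], by ring, by ring⟩
end

section
/- Let F be any field and A₁₂ the 2-dimensional algebra with e₁e₁ = e₂ and all other products of basis vectors zero. Then A₁₂ has no idempotents, and F·e₂ is its unique one-dimensional subalgebra. -/
/-- Multiplication of `A₁₂`: `e₁e₁ = e₂`, all other products of basis vectors zero. -/
def mulA12 {F : Type*} [Field F] (u v : F × F) : F × F :=
  ((0 : F), u.1 * v.1)

theorem stmt_11 {F : Type*} [Field F] :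
    (¬∃ v : F × F, v ≠ 0 ∧ mulA12 v v = v) ∧
      (∀ w : F × F, w ≠ 0 →
        ((∀ u v : F × F, u ∈ Submodule.span F {w} → v ∈ Submodule.span F {w} →
            mulA12 u v ∈ Submodule.span F {w}) ↔
          Submodule.span F {w} = Submodule.span F {(((0 : F), (1 : F)) : F × F)})) := by
  constructor
  · rintro ⟨v, hv, hmul⟩
    have h1 : v.1 = 0 := by
      have := congrArg Prod.fst hmul
      simpa [mulA12] using this.symm
    have h2 : v.2 = 0 := by
      have := congrArg Prod.snd hmul
      simp [mulA12, h1] at this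
      exact this.symm
    exact hv (Prod.ext h1 h2)
  · intro w hw
    constructor
    · intro hclosed
      have hm := hclosed w w (Submodule.mem_span_singleton_self w)
        (Submodule.mem_span_singleton_self w)
      rw [Submodule.mem_span_singleton] at hm
      obtain ⟨c, hc⟩ := hm
      have hw1 : w.1 = 0 := by
        by_contra h1
        have hfst : c * w.1 = 0 := congrArg Prod.fst hc
        have hc0 : c = 0 := by
          rcases mul_eq_zero.mp hfst with h | h
          · exact h
          · exact absurd h h1
        have hsnd : c * w.2 = w.1 * w.1 := congrArg Prod.snd hc
        rw [hc0, zero_mul] at hsnd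
        exact h1 (mul_self_eq_zero.mp hsnd.symm)
      have hw2 : w.2 ≠ 0 := by
        intro h2
        exact hw (Prod.ext hw1 h2)
      rw [Submodule.span_singleton_eq_span_singleton]
      refine ⟨(Units.mk0 w.2 hw2)⁻¹, ?_⟩
      ext
      · simp [Units.smul_def, hw1]
      · simp [Units.smul_def, hw2]
    · intro hspan u v hu hv
      have hw1 : w.1 = 0 := by
        have : w ∈ Submodule.span F {(((0 : F), (1 : F)) : F × F)} := by
          rw [← hspan]; exact Submodule.mem_span_singleton_self w
        rw [Submodule.mem_span_singleton] at this
        obtain ⟨c, hc⟩ := this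
        have := congrArg Prod.fst hc
        simpa using this.symm
      rw [Submodule.mem_span_singleton] at hu ⊢
      obtain ⟨c, hc⟩ := hu
      have hu1 : u.1 = 0 := by
        have := congrArg Prod.fst hc
        simpa [hw1] using this.symm
      exact ⟨0, by simp [mulA12, hu1]; rfl⟩
end

section
/- Let A be a 2-dimensional algebra over F with structure constants α₁,…,α₄, β₁,…,β₄. For y₀ ∈ F, the subspace F·(e₁ + y₀e₂) is a right ideal of A if and only if y₀²α₄ + y₀(α₂ − β₄) − β₂ = 0 and y₀²α₃ + y₀(α₁ − β₃) − β₁ = 0. -/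
def amul {F : Type*} [Field F] (α₁ α₂ α₃ α₄ β₁ β₂ β₃ β₄ : F) (u v : F × F) : F × F :=
  (α₁ * u.1 * v.1 + α₂ * u.1 * v.2 + α₃ * u.2 * v.1 + α₄ * u.2 * v.2,
   β₁ * u.1 * v.1 + β₂ * u.1 * v.2 + β₃ * u.2 * v.1 + β₄ * u.2 * v.2)

theorem stmt_14 {F : Type*} [Field F] (α₁ α₂ α₃ α₄ β₁ β₂ β₃ β₄ : F) (y₀ : F) :
    (∀ v : F × F, ∀ u ∈ Submodule.span F {(((1 : F), y₀) : F × F)},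
        amul α₁ α₂ α₃ α₄ β₁ β₂ β₃ β₄ u v ∈ Submodule.span F {(((1 : F), y₀) : F × F)}) ↔
      (y₀ ^ 2 * α₄ + y₀ * (α₂ - β₄) - β₂ = 0 ∧ y₀ ^ 2 * α₃ + y₀ * (α₁ - β₃) - β₁ = 0) := by
  constructor
  · intro h
    have h1 := h ((0 : F), 1) ((1 : F), y₀) (Submodule.mem_span_singleton_self _)
    have h2 := h ((1 : F), (0 : F)) ((1 : F), y₀) (Submodule.mem_span_singleton_self _)
    rw [Submodule.mem_span_singleton] at h1 h2
    obtain ⟨c, hc⟩ := h1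
    obtain ⟨d, hd⟩ := h2
    simp only [amul, Prod.smul_def, smul_eq_mul, Prod.ext_iff, mul_one] at hc hd
    obtain ⟨hc1, hc2⟩ := hc
    obtain ⟨hd1, hd2⟩ := hd
    constructor
    · linear_combination hc2 - y₀ * hc1
    · linear_combination hd2 - y₀ * hd1
  · rintro ⟨h1, h2⟩ v u hu
    rw [Submodule.mem_span_singleton] at hu ⊢
    obtain ⟨c, rfl⟩ := hu
    refine ⟨c * (α₁ * v.1 + α₂ * v.2 + α₃ * y₀ * v.1 + α₄ * y₀ * v.2), ?_⟩
    simp only [amul, Prod.smul_def, smul_eq_mul, Prod.ext_iff, mul_one]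
    constructor
    · ring
    · linear_combination c * v.2 * h1 + c * v.1 * h2
end

section
/- Let A be a 2-dimensional algebra over F with structure constants satisfying β₂ ≠ β₃, α₂ = α₃, and α₂ ≠ 0. Then A has no one-dimensional two-sided ideal (A is simple). -/
theorem stmt_17 {F : Type*} [Field F] (α₁ α₂ α₃ α₄ β₁ β₂ β₃ β₄ : F)
    (hβ : β₂ ≠ β₃) (hα : α₂ = α₃) (hα2 : α₂ ≠ 0) :
    ¬∃ w : F × F, w ≠ 0 ∧
      ∀ v : F × F, ∀ u ∈ Submodule.span F {w},
        amul α₁ α₂ α₃ α₄ β₁ β₂ β₃ β₄ v u ∈ Submodule.span F {w} ∧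
        amul α₁ α₂ α₃ α₄ β₁ β₂ β₃ β₄ u v ∈ Submodule.span F {w} := by
  rintro ⟨⟨a, b⟩, hw, h⟩
  have hmem : ((a, b) : F × F) ∈ Submodule.span F {((a, b) : F × F)} :=
    Submodule.mem_span_singleton_self _
  by_cases ha : a = 0
  · -- then b ≠ 0, and (1,0) * w has nonzero first coordinate
    have hb : b ≠ 0 := by
      intro hb; exact hw (by simp [ha, hb, Prod.ext_iff])
    obtain ⟨c, hc⟩ := Submodule.mem_span_singleton.mp (h (1, 0) _ hmem).1
    rw [Prod.ext_iff] at hc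
    simp [amul, ha, Prod.smul_def, smul_eq_mul] at hc
    have hx := hc.1
    exact hx.elim hα2 hb
  · -- first show b = 0
    obtain ⟨c₁, hc₁⟩ := Submodule.mem_span_singleton.mp (h (1, 0) _ hmem).1
    obtain ⟨c₂, hc₂⟩ := Submodule.mem_span_singleton.mp (h (1, 0) _ hmem).2
    rw [Prod.ext_iff] at hc₁ hc₂
    simp [amul, Prod.smul_def, smul_eq_mul] at hc₁ hc₂
    have hcc : c₁ = c₂ := by
      have h1 := hc₁.1
      have h2 := hc₂.1
      rw [← hα] at h2
      have : c₁ * a = c₂ * a := by rw [h1, h2]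
      exact mul_right_cancel₀ ha this
    have hb : b = 0 := by
      have h1 := hc₁.2
      have h2 := hc₂.2
      rw [hcc] at h1
      have : β₂ * b = β₃ * b := by linear_combination h2 - h1
      rcases mul_eq_mul_right_iff.mp this with h' | h'
      · exact absurd h' hβ
      · exact h'
    subst hb
    obtain ⟨c₃, hc₃⟩ := Submodule.mem_span_singleton.mp (h (0, 1) _ hmem).1
    obtain ⟨c₄, hc₄⟩ := Submodule.mem_span_singleton.mp (h (0, 1) _ hmem).2
    rw [Prod.ext_iff] at hc₃ hc₄
    simp [amul, Prod.smul_def, smul_eq_mul] at hc₃ hc₄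
    -- hc₃ : c₃ * a = α₃ * a ∧ 0 = β₃ * a ; hc₄ : ... ∧ 0 = β₂ * a
    have h3 : β₃ = 0 := by
      rcases hc₃.2 with h' | h'
      · exact h'
      · exact absurd h' ha
    have h4 : β₂ = 0 := by
      rcases hc₄.2 with h' | h'
      · exact h'
      · exact absurd h' ha
    exact hβ (h4.trans h3.symm)
end

section
/- Let F be a field with char F ≠ 2,3 and let A₅(α₁) be the 2-dimensional algebra with e₁e₁ = α₁e₁ + e₂, e₁e₂ = (2α₁−1)e₂, e₂e₁ = (1−α₁)e₂, e₂e₂ = 0. Then the element e_q ∈ A₅(α₁) satisfies e_q(uv) = (e_q u)v + u(e_q v) − uv for all u,v if and only if α₁ = 1 and e_q = e₁ + t e₂ for some t ∈ F. -/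
/-- Multiplication of `A₅(α₁)`: `e₁e₁ = α₁e₁ + e₂`, `e₁e₂ = (2α₁-1)e₂`,
`e₂e₁ = (1-α₁)e₂`, `e₂e₂ = 0`. -/
def mulA5 {F : Type*} [Field F] (α₁ : F) (u v : F × F) : F × F :=
  (α₁ * u.1 * v.1,
   u.1 * v.1 + (2 * α₁ - 1) * u.1 * v.2 + (1 - α₁) * u.2 * v.1)

theorem stmt_18 {F : Type*} [Field F] (h2 : ringChar F ≠ 2) (h3 : ringChar F ≠ 3)
    (α₁ : F) (e_q : F × F) :
    (∀ u v : F × F,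
        mulA5 α₁ e_q (mulA5 α₁ u v) =
          mulA5 α₁ (mulA5 α₁ e_q u) v + mulA5 α₁ u (mulA5 α₁ e_q v) - mulA5 α₁ u v) ↔
      (α₁ = 1 ∧ ∃ t : F, e_q = ((1 : F), t)) := by
  obtain ⟨a, b⟩ := e_q
  constructor
  · intro h
    have h1 := h (1, 0) (1, 0)
    have h2' := h (1, 0) (0, 1)
    simp only [mulA5, Prod.mk.injEq, Prod.ext_iff, Prod.fst_add, Prod.snd_add,
      Prod.fst_sub, Prod.snd_sub] at h1 h2'
    obtain ⟨e1, e3⟩ := h1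
    obtain ⟨_, e2⟩ := h2'
    -- e1 : α₁(α₁ a - 1) = 0 (after rearranging)
    have E1 : α₁ * (α₁ * a - 1) = 0 := by ring_nf; ring_nf at e1; linear_combination -e1
    have E2 : (2 * α₁ - 1) * (α₁ * a - 1) = 0 := by linear_combination -e2
    have E3 : a = 1 := by linear_combination -e3
    have key : α₁ * a - 1 = 0 := by
      by_contra hk
      have hα : α₁ = 0 := by
        rcases mul_eq_zero.mp E1 with h' | h'
        · exact h'
        · exact absurd h' hk
      rcases mul_eq_zero.mp E2 with h' | h'
      · rw [hα] at h'
        norm_num at h'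
      · exact hk h'
    have hα1 : α₁ = 1 := by rw [E3] at key; linear_combination key
    exact ⟨hα1, b, by rw [E3]⟩
  · rintro ⟨rfl, t, ht⟩
    injection ht with ha hb
    subst ha hb
    intro u v
    simp only [mulA5, Prod.mk.injEq, Prod.ext_iff, Prod.fst_add, Prod.snd_add,
      Prod.fst_sub, Prod.snd_sub]
    constructor <;> ring
end
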